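/- Let ω = e^{2πi/3}, N ≥ 4 and 2 ≤ j ≤ N−2. Let b ∈ ℂ^N satisfy Σ_{k=1}^N |b_k|² = 1, b_j ≠ 0 and b_{j+1} ≠ 0. Write b_j = r e^{iθ} with r > 0 and θ ∈ ℝ, define c_k = b_k e^{−iθ} for k ≠ j, and let p₁, q₁, p₂, q₂ be the unique real numbers with c_{j−1} = ω² p₁ + ω q₁ and c_{j+1} = ω² p₂ + ω q₂. Similarly write b_{j+1} = r̃ e^{iθ̃} with r̃ > 0, define c̃_k = b_k e^{−iθ̃} for k ≠ j+1, and let p̃₁, q̃₁, p̃₂, q̃₂ be the unique reals with c̃_j = ω² p̃₁ + ω q̃₁ and c̃_{j+2} = ω² p̃₂ + ω q̃₂. Then: r̃² = p₂² + q₂² − p₂q₂; e^{i(θ−θ̃)} = (ω p₂ + ω² q₂)/r̃; c̃_k = ((ω p₂ + ω² q₂)/r̃) · c_k for every k ∉ {j, j+1}; p̃₁ = (r/r̃) q₂ and q̃₁ = (r/r̃) p₂; and ω² p̃₂ + ω q̃₂ = ((ω p₂ + ω² q₂)/r̃) · c_{j+2}. -/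

import Mathlib

/-! STATEMENT 17: the change of coordinates between the frames adapted to the
periodic orbits `𝕋_j` and `𝕋_{j+1}`. -/

noncomputable section

open Complex

/-- `ω = e^{2πi/3}` -/
def omg : ℂ := Complex.exp (2 * Real.pi * Complex.I / 3)


lemma omg_eq : omg = Complex.exp (((2 * Real.pi / 3 : ℝ) : ℂ) * Complex.I) := by
  unfold omg; congr 1; push_cast; ring

lemma omg_re : omg.re = -(1/2) := by
  rw [omg_eq, Complex.exp_ofReal_mul_I_re]
  rw [show (2 * Real.pi / 3 : ℝ) = Real.pi - Real.pi / 3 by ring, Real.cos_pi_sub,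
    Real.cos_pi_div_three]

lemma omg_im : omg.im = Real.sqrt 3 / 2 := by
  rw [omg_eq, Complex.exp_ofReal_mul_I_im]
  rw [show (2 * Real.pi / 3 : ℝ) = Real.pi - Real.pi / 3 by ring, Real.sin_pi_sub,
    Real.sin_pi_div_three]

lemma omg_cube : omg ^ 3 = 1 := by
  unfold omg
  rw [← Complex.exp_nat_mul]
  rw [show ((3 : ℕ) : ℂ) * (2 * Real.pi * Complex.I / 3) = 2 * Real.pi * Complex.I by
    push_cast; ring]
  exact Complex.exp_two_pi_mul_I

lemma omg_sum : omg ^ 2 + omg + 1 = 0 := by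
  have h3 : Real.sqrt 3 ^ 2 = 3 := Real.sq_sqrt (by norm_num)
  apply Complex.ext <;>
    simp [pow_two, Complex.add_re, Complex.add_im, Complex.mul_re, Complex.mul_im,
      omg_re, omg_im] <;> nlinarith [h3]

lemma omg_conj : starRingEnd ℂ omg = omg ^ 2 := by
  apply Complex.ext <;>
    simp [pow_two, Complex.mul_re, Complex.mul_im, omg_re, omg_im] <;>
      nlinarith [Real.sq_sqrt (show (0:ℝ) ≤ 3 by norm_num)]

lemma omg_uniq (a b : ℝ) (h : omg ^ 2 * (a : ℂ) + omg * (b : ℂ) = 0) : a = 0 ∧ b = 0 := by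
  have hsq : omg ^ 2 = -1 - omg := by linear_combination omg_sum
  rw [hsq] at h
  have hre := congrArg Complex.re h
  have him := congrArg Complex.im h
  simp [Complex.add_re, Complex.add_im, Complex.mul_re, Complex.mul_im, omg_re, omg_im]
    at hre him
  have hs : Real.sqrt 3 > 0 := Real.sqrt_pos.2 (by norm_num)
  constructor <;> nlinarith [hre, him, hs]


theorem stmt17 (N j : ℕ) (hN : 4 ≤ N) (hj1 : 2 ≤ j) (hj2 : j ≤ N - 2)
    (b : ℕ → ℂ)
    (hmass : (∑ k ∈ Finset.Icc 1 N, ‖b k‖ ^ 2) = 1)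
    (r rt θ θt : ℝ) (hr : 0 < r) (hrt : 0 < rt)
    -- polar decompositions `b_j = r e^{iθ}`, `b_{j+1} = r̃ e^{iθ̃}` (in particular
    -- `b_j ≠ 0` and `b_{j+1} ≠ 0`)
    (hbj : b j = (r : ℂ) * Complex.exp ((θ : ℂ) * Complex.I))
    (hbj1 : b (j + 1) = (rt : ℂ) * Complex.exp ((θt : ℂ) * Complex.I))
    (p₁ q₁ p₂ q₂ pt₁ qt₁ pt₂ qt₂ : ℝ)
    -- the coordinates adapted to the saddle `j` : `c_k = b_k e^{-iθ}`
    (h1 : b (j - 1) * Complex.exp (-(θ : ℂ) * Complex.I)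
            = omg ^ 2 * (p₁ : ℂ) + omg * (q₁ : ℂ))
    (h2 : b (j + 1) * Complex.exp (-(θ : ℂ) * Complex.I)
            = omg ^ 2 * (p₂ : ℂ) + omg * (q₂ : ℂ))
    -- the coordinates adapted to the saddle `j+1` : `c̃_k = b_k e^{-iθ̃}`
    (h3 : b j * Complex.exp (-(θt : ℂ) * Complex.I)
            = omg ^ 2 * (pt₁ : ℂ) + omg * (qt₁ : ℂ))
    (h4 : b (j + 2) * Complex.exp (-(θt : ℂ) * Complex.I)
            = omg ^ 2 * (pt₂ : ℂ) + omg * (qt₂ : ℂ)) :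
    rt ^ 2 = p₂ ^ 2 + q₂ ^ 2 - p₂ * q₂ ∧
    Complex.exp (((θ - θt : ℝ) : ℂ) * Complex.I)
      = (omg * (p₂ : ℂ) + omg ^ 2 * (q₂ : ℂ)) / (rt : ℂ) ∧
    (∀ k : ℕ, 1 ≤ k → k ≤ N → k ≠ j → k ≠ j + 1 →
      b k * Complex.exp (-(θt : ℂ) * Complex.I)
        = ((omg * (p₂ : ℂ) + omg ^ 2 * (q₂ : ℂ)) / (rt : ℂ)) *
            (b k * Complex.exp (-(θ : ℂ) * Complex.I))) ∧
    pt₁ = (r / rt) * q₂ ∧ qt₁ = (r / rt) * p₂ ∧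
    omg ^ 2 * (pt₂ : ℂ) + omg * (qt₂ : ℂ)
      = ((omg * (p₂ : ℂ) + omg ^ 2 * (q₂ : ℂ)) / (rt : ℂ)) *
          (b (j + 2) * Complex.exp (-(θ : ℂ) * Complex.I)) := by
  have hrt0 : (rt : ℂ) ≠ 0 := by exact_mod_cast hrt.ne'
  -- key identity: rt · e^{i(θt-θ)} = ω² p₂ + ω q₂
  have key : (rt : ℂ) * Complex.exp (((θt - θ : ℝ) : ℂ) * Complex.I)
      = omg ^ 2 * (p₂ : ℂ) + omg * (q₂ : ℂ) := by
    rw [← h2, hbj1, mul_assoc, ← Complex.exp_add]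
    congr 2
    push_cast; ring
  -- conjugate identity: rt · e^{i(θ-θt)} = ω p₂ + ω² q₂
  have key2 : (rt : ℂ) * Complex.exp (((θ - θt : ℝ) : ℂ) * Complex.I)
      = omg * (p₂ : ℂ) + omg ^ 2 * (q₂ : ℂ) := by
    have := congrArg (starRingEnd ℂ) key
    rw [map_mul, map_add, map_mul, map_mul, ← Complex.exp_conj, Complex.conj_ofReal,
      map_pow, omg_conj, Complex.conj_ofReal, Complex.conj_ofReal] at this
    rw [show starRingEnd ℂ (((θt - θ : ℝ) : ℂ) * Complex.I) = ((θ - θt : ℝ) : ℂ) * Complex.I by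
      rw [map_mul, Complex.conj_ofReal, Complex.conj_I]; push_cast; ring] at this
    rw [this]
    have h6 : omg ^ 6 = 1 := by
      rw [show (6 : ℕ) = 3 * 2 by norm_num, pow_mul, omg_cube, one_pow]
    linear_combination (p₂ : ℂ) * omg * omg_cube
  -- product of exponentials is 1
  have hprod : Complex.exp (((θt - θ : ℝ) : ℂ) * Complex.I) *
      Complex.exp (((θ - θt : ℝ) : ℂ) * Complex.I) = 1 := by
    rw [← Complex.exp_add, show ((θt - θ : ℝ) : ℂ) * Complex.I + ((θ - θt : ℝ) : ℂ) * Complex.I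
      = 0 by push_cast; ring, Complex.exp_zero]
  -- part (a)
  have ha : rt ^ 2 = p₂ ^ 2 + q₂ ^ 2 - p₂ * q₂ := by
    have hC : ((rt ^ 2 : ℝ) : ℂ) = ((p₂ ^ 2 + q₂ ^ 2 - p₂ * q₂ : ℝ) : ℂ) := by
      push_cast
      calc (rt : ℂ) ^ 2 = ((rt : ℂ) * Complex.exp (((θt - θ : ℝ) : ℂ) * Complex.I)) *
            ((rt : ℂ) * Complex.exp (((θ - θt : ℝ) : ℂ) * Complex.I)) := by
            rw [show ((rt:ℂ) * _) * ((rt:ℂ) * _) = (rt:ℂ)^2 * (Complex.exp (((θt - θ : ℝ) : ℂ) * Complex.I) * Complex.exp (((θ - θt : ℝ) : ℂ) * Complex.I)) by ring, hprod, mul_one]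
        _ = (omg ^ 2 * (p₂ : ℂ) + omg * (q₂ : ℂ)) * (omg * (p₂ : ℂ) + omg ^ 2 * (q₂ : ℂ)) := by
            rw [key, key2]
        _ = (p₂ : ℂ) ^ 2 + (q₂ : ℂ) ^ 2 - (p₂ : ℂ) * (q₂ : ℂ) := by
            linear_combination ((p₂ : ℂ) ^ 2 + (q₂ : ℂ) ^ 2 + (p₂ : ℂ) * (q₂ : ℂ) * omg) * omg_cube
              + (p₂ : ℂ) * (q₂ : ℂ) * omg_sum
    exact_mod_cast hC
  -- part (b)
  have hb : Complex.exp (((θ - θt : ℝ) : ℂ) * Complex.I)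
      = (omg * (p₂ : ℂ) + omg ^ 2 * (q₂ : ℂ)) / (rt : ℂ) := by
    rw [eq_div_iff hrt0, mul_comm, key2]
  -- exponential transfer, valid for any z
  have hc : ∀ z : ℂ, z * Complex.exp (-(θt : ℂ) * Complex.I)
      = ((omg * (p₂ : ℂ) + omg ^ 2 * (q₂ : ℂ)) / (rt : ℂ)) *
          (z * Complex.exp (-(θ : ℂ) * Complex.I)) := by
    intro z
    rw [← hb]
    rw [show Complex.exp (((θ - θt : ℝ) : ℂ) * Complex.I) * (z * Complex.exp (-(θ : ℂ) * Complex.I)) = z * (Complex.exp (((θ - θt : ℝ) : ℂ) * Complex.I) * Complex.exp (-(θ : ℂ) * Complex.I)) by ring, ← Complex.exp_add]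
    congr 2
    push_cast; ring
  -- part (d): uniqueness of coordinates
  have hd : pt₁ = (r / rt) * q₂ ∧ qt₁ = (r / rt) * p₂ := by
    have hL : omg ^ 2 * (pt₁ : ℂ) + omg * (qt₁ : ℂ)
        = omg ^ 2 * (((r / rt) * q₂ : ℝ) : ℂ) + omg * (((r / rt) * p₂ : ℝ) : ℂ) := by
      rw [← h3, hbj, hc]
      rw [← hb]
      rw [mul_assoc (r : ℂ), ← Complex.exp_add,
        show (θ : ℂ) * Complex.I + -(θ : ℂ) * Complex.I = 0 by ring, Complex.exp_zero,
        mul_one, hb]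
      push_cast
      field_simp
      ring
    have h0 : omg ^ 2 * ((pt₁ - (r / rt) * q₂ : ℝ) : ℂ)
        + omg * ((qt₁ - (r / rt) * p₂ : ℝ) : ℂ) = 0 := by
      push_cast
      push_cast at hL
      linear_combination hL
    obtain ⟨e1, e2⟩ := omg_uniq _ _ h0
    constructor <;> linarith
  refine ⟨ha, hb, fun k _ _ _ _ => hc (b k), hd.1, hd.2, ?_⟩
  rw [← h4, hc]

end
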